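/- Fix signs ε = (ε_0,…,ε_n) ∈ {±1}^{n+1} and integers 0 ≤ j < i ≤ n. Then the intersection ⁿΓ_i^ε ∩ ⁿΓ_j^ε equals the closed boundary face of ⁿΓ_i^ε cut out by the additional equation h_{i,j}(σ_ε x) = 0; that is, every point of ⁿΓ_i^ε with h_{i,j}(σ_ε x) = 0 automatically lies on ⁿΓ_j^ε (it satisfies the equation and all the defining inequalities of ⁿΓ_j^ε), and conversely every common point of ⁿΓ_i^ε and ⁿΓ_j^ε satisfies h_{i,j}(σ_ε x) = 0. Moreover, at every point of this intersection the defining functions ε_0 h_i(σ_ε x)² and ε_0 h_j(σ_ε x)² have equal values and equal gradients, so the whole intersection is a tangency locus of the two pieces. -/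

import Mathlib

open scoped ContDiff

noncomputable section

/-- The polynomial `h_i` in the variables `x_1, …, x_i` (0-indexed: it depends on
coordinates `0, …, i-1`): `h_0 = 0`, `h_{i+1}(x) = x 0 - (h_i (x ∘ (·+1)))^2`. -/
def hpoly : ℕ → (ℕ → ℝ) → ℝ
  | 0, _ => 0
  | i + 1, x => x 0 - (hpoly i fun k => x (k + 1)) ^ 2

/-- Extension of a vector of `ℝⁿ` by zeros to an infinite sequence. -/
def extv {n : ℕ} (x : Fin n → ℝ) : ℕ → ℝ := fun k => if h : k < n then x ⟨k, h⟩ else 0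

/-- `h_{i,j}` as a function on `ℝⁿ` (0-indexed: it depends on coordinates `j, …, i-1`;
in the paper's notation `h_{i,j}(x) = h_{i-j}(x_{j+1}, …, x_i)`). -/
def hh (n i j : ℕ) (x : Fin n → ℝ) : ℝ := hpoly (i - j) fun k => extv x (j + k)

/-- The gradient of a function on `ℝⁿ`, via the Fréchet derivative. -/
def grad {n : ℕ} (f : (Fin n → ℝ) → ℝ) (x : Fin n → ℝ) : Fin n → ℝ :=
  fun k => fderiv ℝ f x (Pi.single k 1)

/-- The `m`-th standard basis vector of `ℝⁿ` (zero if `m ≥ n`). -/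
def evec (n m : ℕ) : Fin n → ℝ := fun k => if (k : ℕ) = m then 1 else 0

lemma extv_lt {n : ℕ} (x : Fin n → ℝ) (m : ℕ) (h : m < n) : extv x m = x ⟨m, h⟩ := dif_pos h

lemma hh_stop (n i m : ℕ) (h : i ≤ m) (x : Fin n → ℝ) : hh n i m x = 0 := by
  unfold hh
  rw [Nat.sub_eq_zero_of_le h]
  rfl

lemma hh_rec (n i m : ℕ) (h : m < i) (x : Fin n → ℝ) :
    hh n i m x = extv x m - (hh n i (m + 1) x) ^ 2 := by
  unfold hh
  obtain ⟨d, hd⟩ : ∃ d, i - m = d + 1 := ⟨i - m - 1, by omega⟩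
  have hd' : i - (m + 1) = d := by omega
  rw [hd, hd']
  have e2 : (fun k => extv x (m + (k + 1))) = fun k => extv x (m + 1 + k) := by
    funext k
    congr 1
    omega
  show extv x (m + 0) - (hpoly d fun k => extv x (m + (k + 1))) ^ 2 = _
  rw [e2]
  rfl

lemma hh_sigma_rec {n : ℕ} (ε : Fin (n + 1) → ℝ) (σ : (Fin n → ℝ) → Fin n → ℝ)
    (hσ : ∀ x m, σ x m = ε ⟨(m : ℕ) + 1, Nat.succ_lt_succ m.isLt⟩ * x m)
    {i m : ℕ} (hm : m < i) (hi : i ≤ n) (p : m + 1 < n + 1) (q : m < n) (y : Fin n → ℝ) :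
    hh n i m (σ y) = ε ⟨m + 1, p⟩ * y ⟨m, q⟩ - (hh n i (m + 1) (σ y)) ^ 2 := by
  rw [hh_rec n i m hm, extv_lt (σ y) m q, hσ]

lemma hh_eq_of_zero (n i j : ℕ) (hji : j ≤ i) (x : Fin n → ℝ) (h0 : hh n i j x = 0) :
    ∀ d m, m + d = j → hh n i m x = hh n j m x := by
  intro d
  induction d with
  | zero =>
    intro m hm
    rw [show m = j by omega, h0, hh_stop n j j le_rfl]
  | succ d ih =>
    intro m hm
    rw [hh_rec n i m (by omega), hh_rec n j m (by omega), ih (m + 1) (by omega)]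

lemma hh_sigma_diff {n : ℕ} (ε : Fin (n + 1) → ℝ) (σ : (Fin n → ℝ) → Fin n → ℝ)
    (hσ : ∀ x m, σ x m = ε ⟨(m : ℕ) + 1, Nat.succ_lt_succ m.isLt⟩ * x m)
    (i : ℕ) (hin : i ≤ n) :
    ∀ d m, i ≤ m + d → Differentiable ℝ (fun y : Fin n → ℝ => hh n i m (σ y)) := by
  intro d
  induction d with
  | zero =>
    intro m hm
    have h : (fun y : Fin n → ℝ => hh n i m (σ y)) = fun _ => 0 :=
      funext fun y => hh_stop n i m (by omega) (σ y)
    rw [h]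
    exact differentiable_const 0
  | succ d ih =>
    intro m hm
    by_cases h : m < i
    · have q : m < n := by omega
      have p : m + 1 < n + 1 := by omega
      have e : (fun y : Fin n → ℝ => hh n i m (σ y))
          = fun y => ε ⟨m + 1, p⟩ * y ⟨m, q⟩ - (hh n i (m + 1) (σ y)) ^ 2 :=
        funext fun y => hh_sigma_rec ε σ hσ h hin p q y
      rw [e]
      exact (((differentiable_const _).fun_mul
        ((ContinuousLinearMap.proj (⟨m, q⟩ : Fin n) : (Fin n → ℝ) →L[ℝ] ℝ).differentiable) :
          Differentiable ℝ fun y : Fin n → ℝ => ε ⟨m + 1, p⟩ * y ⟨m, q⟩)).sub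
        ((ih (m + 1) (by omega)).pow 2)
    · have e : (fun y : Fin n → ℝ => hh n i m (σ y)) = fun _ => 0 :=
        funext fun y => hh_stop n i m (by omega) (σ y)
      rw [e]
      exact differentiable_const 0

lemma signkey (c₁ c₂ a b : ℝ) (h₁ : c₁ = 1 ∨ c₁ = -1) (h₂ : c₂ = 1 ∨ c₂ = -1)
    (ha : c₁ * c₂ * a ≤ 0) (hb : c₁ * c₂ * b ≤ 0) (hsq : a ^ 2 = b ^ 2) : a = b := by
  have h2 : (a - b) * (a + b) = 0 := by linear_combination hsq
  rcases h₁ with rfl | rfl <;> rcases h₂ with rfl | rfl <;>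
    rcases mul_eq_zero.mp h2 with h | h <;> linarith

lemma hh_sigma_deriv_eq {n i j : ℕ} (hji : j < i) (hin : i ≤ n)
    (ε : Fin (n + 1) → ℝ) (σ : (Fin n → ℝ) → Fin n → ℝ)
    (hσ : ∀ x m, σ x m = ε ⟨(m : ℕ) + 1, Nat.succ_lt_succ m.isLt⟩ * x m)
    (x : Fin n → ℝ) (h0 : hh n i j (σ x) = 0) :
    ∀ d m, m + d = j → 1 ≤ d →
      fderiv ℝ (fun y => hh n i m (σ y)) x = fderiv ℝ (fun y => hh n j m (σ y)) x := by
  intro d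
  induction d with
  | zero => intro m _ h; omega
  | succ d ih =>
    intro m hm _
    have q : m < n := by omega
    have p : m + 1 < n + 1 := by omega
    have ei : (fun y : Fin n → ℝ => hh n i m (σ y))
        = fun y => ε ⟨m + 1, p⟩ * y ⟨m, q⟩ - (hh n i (m + 1) (σ y)) ^ 2 :=
      funext fun y => hh_sigma_rec ε σ hσ (by omega) hin p q y
    have ej : (fun y : Fin n → ℝ => hh n j m (σ y))
        = fun y => ε ⟨m + 1, p⟩ * y ⟨m, q⟩ - (hh n j (m + 1) (σ y)) ^ 2 :=
      funext fun y => hh_sigma_rec ε σ hσ (by omega) (by omega) p q y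
    have di : DifferentiableAt ℝ (fun y => hh n i (m + 1) (σ y)) x :=
      (hh_sigma_diff ε σ hσ i hin i (m + 1) (by omega)).differentiableAt
    have dj : DifferentiableAt ℝ (fun y => hh n j (m + 1) (σ y)) x :=
      (hh_sigma_diff ε σ hσ j (by omega) j (m + 1) (by omega)).differentiableAt
    have hg2i : HasFDerivAt (fun y : Fin n → ℝ => (hh n i (m + 1) (σ y)) ^ 2)
        (hh n i (m + 1) (σ x) • fderiv ℝ (fun y => hh n i (m + 1) (σ y)) x
          + hh n i (m + 1) (σ x) • fderiv ℝ (fun y => hh n i (m + 1) (σ y)) x) x := by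
      simpa [pow_two] using di.hasFDerivAt.fun_mul di.hasFDerivAt
    have hg2j : HasFDerivAt (fun y : Fin n → ℝ => (hh n j (m + 1) (σ y)) ^ 2)
        (hh n j (m + 1) (σ x) • fderiv ℝ (fun y => hh n j (m + 1) (σ y)) x
          + hh n j (m + 1) (σ x) • fderiv ℝ (fun y => hh n j (m + 1) (σ y)) x) x := by
      simpa [pow_two] using dj.hasFDerivAt.fun_mul dj.hasFDerivAt
    have Hi : HasFDerivAt (fun y : Fin n → ℝ => hh n i m (σ y))
        ((ε ⟨m + 1, p⟩) • (ContinuousLinearMap.proj (⟨m, q⟩ : Fin n) :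
            (Fin n → ℝ) →L[ℝ] ℝ)
          - (hh n i (m + 1) (σ x) • fderiv ℝ (fun y => hh n i (m + 1) (σ y)) x
              + hh n i (m + 1) (σ x) • fderiv ℝ (fun y => hh n i (m + 1) (σ y)) x)) x := by
      rw [ei]
      exact (((ContinuousLinearMap.proj (⟨m, q⟩ : Fin n) :
        (Fin n → ℝ) →L[ℝ] ℝ)).hasFDerivAt.const_mul _).sub hg2i
    have Hj : HasFDerivAt (fun y : Fin n → ℝ => hh n j m (σ y))
        ((ε ⟨m + 1, p⟩) • (ContinuousLinearMap.proj (⟨m, q⟩ : Fin n) :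
            (Fin n → ℝ) →L[ℝ] ℝ)
          - (hh n j (m + 1) (σ x) • fderiv ℝ (fun y => hh n j (m + 1) (σ y)) x
              + hh n j (m + 1) (σ x) • fderiv ℝ (fun y => hh n j (m + 1) (σ y)) x)) x := by
      rw [ej]
      exact (((ContinuousLinearMap.proj (⟨m, q⟩ : Fin n) :
        (Fin n → ℝ) →L[ℝ] ℝ)).hasFDerivAt.const_mul _).sub hg2j
    rw [Hi.fderiv, Hj.fderiv]
    by_cases hd : d = 0
    · have h1 : hh n i (m + 1) (σ x) = 0 := by
        rw [show m + 1 = j by omega]; exact h0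
      have h2 : hh n j (m + 1) (σ x) = 0 := hh_stop n j (m + 1) (by omega) _
      rw [h1, h2]
      simp
    · rw [hh_eq_of_zero n i j (le_of_lt hji) (σ x) h0 d (m + 1) (by omega),
        ih (m + 1) (by omega) (by omega)]

/-- Fix signs `ε ∈ {±1}^{n+1}` and `0 ≤ j < i ≤ n`.  Then
`ⁿΓ_i^ε ∩ ⁿΓ_j^ε` equals the closed boundary face of `ⁿΓ_i^ε` cut out by `h_{i,j}(σ_ε x) = 0`:
every point of `ⁿΓ_i^ε` with `h_{i,j}(σ_ε x) = 0` lies on `ⁿΓ_j^ε` and conversely every common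
point satisfies `h_{i,j}(σ_ε x) = 0`.  Moreover, at every point of the intersection the defining
functions `ε_0 h_i(σ_ε x)²` and `ε_0 h_j(σ_ε x)²` have equal values and equal gradients. -/
theorem stmt_11 (n i j : ℕ) (hji : j < i) (hin : i ≤ n)
    (ε : Fin (n + 1) → ℝ) (hε : ∀ k, ε k = 1 ∨ ε k = -1)
    (σ : (Fin n → ℝ) → (Fin n → ℝ))
    (hσ : ∀ x m, σ x m = ε ⟨(m : ℕ) + 1, Nat.succ_lt_succ m.isLt⟩ * x m)
    (Γi Γj : Set (ℝ × (Fin n → ℝ)))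
    (hΓi : Γi = {z | z.1 = ε 0 * (hh n i 0 (σ z.2)) ^ 2 ∧
      ∀ m : ℕ, ∀ hm : m < i,
        ε ⟨m, Nat.lt_succ_of_lt (lt_of_lt_of_le hm hin)⟩ *
          ε ⟨m + 1, Nat.succ_lt_succ (lt_of_lt_of_le hm hin)⟩ * hh n i m (σ z.2) ≤ 0})
    (hΓj : Γj = {z | z.1 = ε 0 * (hh n j 0 (σ z.2)) ^ 2 ∧
      ∀ m : ℕ, ∀ hm : m < j,
        ε ⟨m, Nat.lt_succ_of_lt (lt_of_lt_of_le hm (le_of_lt (lt_of_lt_of_le hji hin)))⟩ *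
          ε ⟨m + 1, Nat.succ_lt_succ (lt_of_lt_of_le hm (le_of_lt (lt_of_lt_of_le hji hin)))⟩ *
          hh n j m (σ z.2) ≤ 0}) :
    Γi ∩ Γj = {z ∈ Γi | hh n i j (σ z.2) = 0} ∧
    ∀ z ∈ Γi ∩ Γj,
      ε 0 * (hh n i 0 (σ z.2)) ^ 2 = ε 0 * (hh n j 0 (σ z.2)) ^ 2 ∧
      grad (fun y => ε 0 * (hh n i 0 (σ y)) ^ 2) z.2
        = grad (fun y => ε 0 * (hh n j 0 (σ y)) ^ 2) z.2 := by
  have hε0 : ε 0 ≠ 0 := by rcases hε 0 with h | h <;> rw [h] <;> norm_num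
  have main0 : ∀ z : ℝ × (Fin n → ℝ), z ∈ Γi → z ∈ Γj → hh n i j (σ z.2) = 0 := by
    intro z hzi hzj
    rw [hΓi] at hzi
    rw [hΓj] at hzj
    obtain ⟨hi1, hi2⟩ := hzi
    obtain ⟨hj1, hj2⟩ := hzj
    have sq : ∀ m, m ≤ j → (hh n i m (σ z.2)) ^ 2 = (hh n j m (σ z.2)) ^ 2 := by
      intro m
      induction m with
      | zero => intro _; exact mul_left_cancel₀ hε0 (hi1.symm.trans hj1)
      | succ m ih =>
        intro hm1
        have hsq := ih (by omega)
        have hab : hh n i m (σ z.2) = hh n j m (σ z.2) :=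
          signkey _ _ _ _ (hε _) (hε _) (hi2 m (by omega)) (hj2 m (by omega)) hsq
        have q : m < n := by omega
        have p : m + 1 < n + 1 := by omega
        rw [hh_sigma_rec ε σ hσ (show m < i by omega) hin p q,
          hh_sigma_rec ε σ hσ (show m < j by omega) (by omega) p q] at hab
        linarith
    have h1 := sq j le_rfl
    rw [hh_stop n j j le_rfl] at h1
    have h2 : hh n i j (σ z.2) ^ 2 = 0 := by simpa using h1
    exact pow_eq_zero_iff (two_ne_zero) |>.mp h2
  have forward : ∀ z : ℝ × (Fin n → ℝ), z ∈ Γi → hh n i j (σ z.2) = 0 → z ∈ Γj := by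
    intro z hzi h0
    rw [hΓi] at hzi
    obtain ⟨hi1, hi2⟩ := hzi
    rw [hΓj]
    refine ⟨?_, ?_⟩
    · rw [hi1, hh_eq_of_zero n i j hji.le (σ z.2) h0 j 0 (by omega)]
    · intro m hm
      rw [← hh_eq_of_zero n i j hji.le (σ z.2) h0 (j - m) m (by omega)]
      exact hi2 m (by omega)
  constructor
  · ext z
    constructor
    · rintro ⟨hzi, hzj⟩
      exact ⟨hzi, main0 z hzi hzj⟩
    · rintro ⟨hzi, h0⟩
      exact ⟨hzi, forward z hzi h0⟩
  · rintro z ⟨hzi, hzj⟩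
    have h0z := main0 z hzi hzj
    have veq0 := hh_eq_of_zero n i j hji.le (σ z.2) h0z j 0 (by omega)
    refine ⟨by rw [veq0], ?_⟩
    have Gdi : DifferentiableAt ℝ (fun y => hh n i 0 (σ y)) z.2 :=
      (hh_sigma_diff ε σ hσ i hin i 0 (by omega)).differentiableAt
    have Gdj : DifferentiableAt ℝ (fun y => hh n j 0 (σ y)) z.2 :=
      (hh_sigma_diff ε σ hσ j (by omega) j 0 (by omega)).differentiableAt
    have hg2i : HasFDerivAt (fun y : Fin n → ℝ => (hh n i 0 (σ y)) ^ 2)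
        (hh n i 0 (σ z.2) • fderiv ℝ (fun y => hh n i 0 (σ y)) z.2
          + hh n i 0 (σ z.2) • fderiv ℝ (fun y => hh n i 0 (σ y)) z.2) z.2 := by
      simpa [pow_two] using Gdi.hasFDerivAt.fun_mul Gdi.hasFDerivAt
    have hg2j : HasFDerivAt (fun y : Fin n → ℝ => (hh n j 0 (σ y)) ^ 2)
        (hh n j 0 (σ z.2) • fderiv ℝ (fun y => hh n j 0 (σ y)) z.2
          + hh n j 0 (σ z.2) • fderiv ℝ (fun y => hh n j 0 (σ y)) z.2) z.2 := by
      simpa [pow_two] using Gdj.hasFDerivAt.fun_mul Gdj.hasFDerivAt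
    have Hi := hg2i.const_mul (ε 0)
    have Hj := hg2j.const_mul (ε 0)
    have hfd : fderiv ℝ (fun y : Fin n → ℝ => ε 0 * (hh n i 0 (σ y)) ^ 2) z.2
        = fderiv ℝ (fun y : Fin n → ℝ => ε 0 * (hh n j 0 (σ y)) ^ 2) z.2 := by
      rw [Hi.fderiv, Hj.fderiv]
      by_cases hj0 : j = 0
      · subst hj0
        have h2 : hh n 0 0 (σ z.2) = 0 := hh_stop n 0 0 le_rfl _
        rw [h0z, h2]
        simp
      · rw [veq0, hh_sigma_deriv_eq hji hin ε σ hσ z.2 h0z j 0 (by omega) (by omega)]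
    show grad _ z.2 = grad _ z.2
    unfold grad
    rw [hfd]
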